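/- Let X be a Baire space, and let Y be a W̃-space which possesses a rich family 𝔉 all of whose members are Baire spaces. Then X × Y (with the product topology) is a Baire space. -/

import Mathlib

open Filter Set Topology

/-- `x` is a W̃-point: player I has a winning strategy in the game G̃(x), where player I
chooses arbitrary nonempty open sets and player II picks points in them; player I wins
when `x` is an accumulation point (cluster point) of the resulting sequence. -/
def IsWtildePoint {X : Type*} [TopologicalSpace X] (x : X) : Prop :=
  ∃ σ : List X → Set X,
    (∀ h : List X, IsOpen (σ h) ∧ (σ h).Nonempty) ∧
    ∀ p : ℕ → X,
      (∀ n : ℕ, p n ∈ σ (List.ofFn fun i : Fin n => p i)) →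
      MapClusterPt x atTop p

/-- A set `s` is a separable subspace: it has a countable subset that is dense in `s`. -/
def SeparableSubspace {Y : Type*} [TopologicalSpace Y] (s : Set Y) : Prop :=
  ∃ c : Set Y, c ⊆ s ∧ c.Countable ∧ s ⊆ closure c

/-- A rich family: a family of nonempty closed separable subspaces such that every
separable subspace is contained in some member, and the closure of the union of any
increasing sequence of members is again a member. -/
def IsRichFamily {Y : Type*} [TopologicalSpace Y] (𝓕 : Set (Set Y)) : Prop :=
  (∀ F ∈ 𝓕, F.Nonempty ∧ IsClosed F ∧ SeparableSubspace F) ∧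
  (∀ Z : Set Y, SeparableSubspace Z → ∃ F ∈ 𝓕, Z ⊆ F) ∧
  (∀ F : ℕ → Set Y, (∀ n, F n ∈ 𝓕) → Monotone F → closure (⋃ n, F n) ∈ 𝓕)



/-- The tree of positions used in the Oxtoby/Krom argument. -/
def bmTree {X : Type*} (mac : List (Set X) → Set (Set X)) : ℕ → Set (List (Set X))
  | 0 => {[]}
  | (n+1) => {l' | ∃ l ∈ bmTree mac n, ∃ A ∈ mac l, l' = A :: l}

/-- Oxtoby's theorem: in a Baire space, the second player (the one trying to reach
empty intersection) has no winning strategy in the Banach–Mazur game. -/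
theorem bm_defeat {X : Type*} [TopologicalSpace X] [BaireSpace X]
    (t : List (Set X) → Set X)
    (h1 : ∀ l, IsOpen (t l)) (h1' : ∀ l, (t l).Nonempty)
    (h2 : ∀ A l, A.Nonempty → IsOpen A → t (A :: l) ⊆ A) :
    ∃ A : ℕ → Set X,
      (∀ s, IsOpen (A s) ∧ (A s).Nonempty ∧
        A s ⊆ t ((List.ofFn fun i : Fin s => A i).reverse)) ∧
      (⋂ s, A s).Nonempty := by
  classical
  -- maximal antichains
  have hmax : ∀ l : List (Set X), ∃ M : Set (Set X),
      (∀ A ∈ M, IsOpen A ∧ A.Nonempty ∧ A ⊆ t l) ∧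
      (M.Pairwise fun A A' => Disjoint (t (A :: l)) (t (A' :: l))) ∧
      (∀ G, IsOpen G → G.Nonempty → G ⊆ t l →
        ∃ A ∈ M, ((t (G :: l)) ∩ (t (A :: l))).Nonempty) := by
    intro l
    set S : Set (Set (Set X)) :=
      {C | (∀ A ∈ C, IsOpen A ∧ A.Nonempty ∧ A ⊆ t l) ∧
        C.Pairwise fun A A' => Disjoint (t (A :: l)) (t (A' :: l))} with hS
    have hchainub : ∀ c ⊆ S, IsChain (· ⊆ ·) c → ∃ ub ∈ S, ∀ s ∈ c, s ⊆ ub := by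
      intro c hcS hchain
      refine ⟨⋃₀ c, ⟨?_, ?_⟩, fun s hs => subset_sUnion_of_mem hs⟩
      · rintro A ⟨C, hC, hAC⟩
        exact (hcS hC).1 A hAC
      · intro A hA B hB hne
        obtain ⟨CA, hCA, hAC⟩ := hA
        obtain ⟨CB, hCB, hBC⟩ := hB
        rcases hchain.total hCA hCB with h | h
        · exact (hcS hCB).2 (h hAC) hBC hne
        · exact (hcS hCA).2 hAC (h hBC) hne
    obtain ⟨M, hM⟩ := zorn_subset S hchainub
    obtain ⟨hMsub, hMpair⟩ := hM.1
    refine ⟨M, hMsub, hMpair, ?_⟩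
    intro G hGo hGne hGsub
    by_cases hGM : G ∈ M
    · refine ⟨G, hGM, ?_⟩
      obtain ⟨z, hz⟩ := h1' (G :: l)
      exact ⟨z, hz, hz⟩
    · by_contra hcon
      push_neg at hcon
      have hdisj : ∀ A ∈ M, Disjoint (t (G :: l)) (t (A :: l)) := by
        intro A hA
        rw [Set.disjoint_iff_inter_eq_empty]
        exact hcon A hA
      have hins : insert G M ∈ S := by
        constructor
        · rintro A (rfl | hA)
          · exact ⟨hGo, hGne, hGsub⟩
          · exact hMsub A hA
        · rintro A (rfl | hA) B (rfl | hB) hne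
          · exact absurd rfl hne
          · exact hdisj B hB
          · exact (hdisj A hA).symm
          · exact hMpair hA hB hne
      have := hM.2 hins (subset_insert G M)
      exact hGM (this (mem_insert G M))
  choose maxAC hmac1 hmac2 hmac3 using hmax
  have hsubt : ∀ l A, A ∈ maxAC l → t (A :: l) ⊆ t l := by
    intro l A hA
    obtain ⟨ho, hne, hsub⟩ := hmac1 l A hA
    exact (h2 A l hne ho).trans hsub
  set T := bmTree maxAC with hT
  have hdisj : ∀ n, (T n).Pairwise fun l l' => Disjoint (t l) (t l') := by
    intro n
    induction n with
    | zero =>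
      intro l hl l' hl' hne
      rw [hT] at hl hl'
      exact absurd (hl.trans hl'.symm) hne
    | succ n ih =>
      rintro l hl l' hl' hne
      obtain ⟨m, hm, A, hA, rfl⟩ := hl
      obtain ⟨m', hm', A', hA', rfl⟩ := hl'
      by_cases hmm : m = m'
      · subst hmm
        have hAA : A ≠ A' := fun h => hne (by rw [h])
        exact hmac2 m hA hA' hAA
      · exact Disjoint.mono (hsubt m A hA) (hsubt m' A' hA') (ih hm hm' hmm)
  have hEopen : ∀ n, IsOpen (⋃ l ∈ T n, t l) := fun n => isOpen_biUnion fun l _ => h1 l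
  have hE0 : (⋃ l ∈ T 0, t l) = t [] := by
    rw [hT]; simp [bmTree]
  have hdense : ∀ n, (⋃ l ∈ T n, t l) ⊆ closure (⋃ l ∈ T (n+1), t l) := by
    intro n x hx
    obtain ⟨l, hl, hxl⟩ := mem_iUnion₂.mp hx
    rw [mem_closure_iff]
    intro o ho hxo
    have hGne : (o ∩ t l).Nonempty := ⟨x, hxo, hxl⟩
    have hGo : IsOpen (o ∩ t l) := ho.inter (h1 l)
    obtain ⟨A, hA, z, hz1, hz2⟩ := hmac3 l (o ∩ t l) hGo hGne inter_subset_right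
    refine ⟨z, (h2 _ l hGne hGo hz1).1, ?_⟩
    exact mem_biUnion (show A :: l ∈ T (n+1) from ⟨l, hl, A, hA, rfl⟩) hz2
  have hdense0 : ∀ n, (⋃ l ∈ T 0, t l) ⊆ closure (⋃ l ∈ T n, t l) := by
    intro n
    induction n with
    | zero => exact subset_closure
    | succ n ih =>
      have h3 : closure (⋃ l ∈ T n, t l) ⊆ closure (⋃ l ∈ T (n+1), t l) := by
        have := closure_mono (hdense n)
        rwa [closure_closure] at this
      exact ih.trans h3
  have hD : ∀ n, Dense ((⋃ l ∈ T n, t l) ∪ (closure (⋃ l ∈ T 0, t l))ᶜ) := by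
    intro n x
    by_cases hx : x ∈ closure (⋃ l ∈ T 0, t l)
    · have h4 : x ∈ closure (⋃ l ∈ T n, t l) := by
        have := closure_mono (hdense0 n)
        rw [closure_closure] at this
        exact this hx
      exact closure_mono subset_union_left h4
    · exact subset_closure (mem_union_right _ hx)
  have hBi := dense_iInter_of_isOpen
    (fun n => (hEopen n).union (isClosed_closure.isOpen_compl)) hD
  obtain ⟨x0, hx0t, hx0i⟩ := hBi.inter_open_nonempty (t []) (h1 []) (h1' [])
  have hx0E0 : x0 ∈ ⋃ l ∈ T 0, t l := by rw [hE0]; exact hx0t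
  have hx0E : ∀ n, x0 ∈ ⋃ l ∈ T n, t l := by
    intro n
    rcases mem_iInter.mp hx0i n with h | h
    · exact h
    · exact absurd (subset_closure hx0E0) h
  have huniq : ∀ n l l', l ∈ T n → l' ∈ T n → x0 ∈ t l → x0 ∈ t l' → l = l' := by
    intro n l l' hl hl' hxl hxl'
    by_contra hne
    exact Set.disjoint_left.mp (hdisj n hl hl' hne) hxl hxl'
  have hex : ∀ n, ∃ l, l ∈ T n ∧ x0 ∈ t l := by
    intro n
    obtain ⟨l, hl, hxl⟩ := mem_iUnion₂.mp (hx0E n)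
    exact ⟨l, hl, hxl⟩
  choose L hLT hLx using hex
  have hL0 : L 0 = [] := hLT 0
  have hstep : ∀ n, ∃ A ∈ maxAC (L n), L (n+1) = A :: L n := by
    intro n
    obtain ⟨m, hm, A, hA, heq⟩ := hLT (n+1)
    have hxm : x0 ∈ t m := hsubt m A hA (heq ▸ hLx (n+1))
    have hmL : m = L n := huniq n m (L n) hm (hLT n) hxm (hLx n)
    exact ⟨A, hmL ▸ hA, by rw [heq, hmL]⟩
  choose Aseq hAmem hAeq using hstep
  have hLs : ∀ s, L s = (List.ofFn fun i : Fin s => Aseq i).reverse := by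
    intro s
    induction s with
    | zero => simpa using hL0
    | succ s ih =>
      rw [hAeq s, ih]
      have : (List.ofFn fun i : Fin (s+1) => Aseq i)
          = (List.ofFn fun i : Fin s => Aseq i).concat (Aseq s) := by
        rw [List.ofFn_succ']
        congr 1
      rw [this, List.concat_eq_append, List.reverse_append]
      simp
  refine ⟨Aseq, fun s => ?_, ⟨x0, mem_iInter.mpr fun s => ?_⟩⟩
  · obtain ⟨ho, hne, hsub⟩ := hmac1 (L s) (Aseq s) (hAmem s)
    exact ⟨ho, hne, (hLs s) ▸ hsub⟩
  · have hx1 := hLx (s+1)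
    rw [hAeq s] at hx1
    exact h2 _ _ (hmac1 (L s) (Aseq s) (hAmem s)).2.1 (hmac1 _ _ (hAmem s)).1 hx1


/-- State of the auxiliary construction: current open set in `X`, the chain of
members of the rich family built so far, the runs of the W̃-games, and the
recorded open sets of `Y` (whose product with the current `X`-set lies in the
corresponding dense open set). -/
structure GSt (X Y : Type*) where
  U : Set X
  Fs : List (Set Y)
  runs : ℕ → List Y
  rcd : ℕ → Set Y

section Machinery

variable {X Y : Type*} [TopologicalSpace X] [TopologicalSpace Y]

/-- Specification of the data picked at each step. -/
def Pw (Onn : Set (X × Y)) (A : Set X) (S : Set Y) (w : Set X × Set Y × Y) : Prop :=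
  IsOpen w.1 ∧ w.1.Nonempty ∧ w.1 ⊆ A ∧ IsOpen w.2.1 ∧ w.2.2 ∈ w.2.1 ∧ w.2.2 ∈ S ∧
    w.1 ×ˢ w.2.1 ⊆ Onn

noncomputable def pickW (Onn : Set (X × Y)) (A : Set X) (S : Set Y) (d : Y) :
    Set X × Set Y × Y := by
  classical exact if h : ∃ w, Pw Onn A S w then h.choose else (A, ∅, d)

lemma pickW_spec {Onn : Set (X × Y)} {A : Set X} {S : Set Y} (d : Y)
    (h : ∃ w, Pw Onn A S w) : Pw Onn A S (pickW Onn A S d) := by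
  rw [pickW]
  simp only [dif_pos h]
  exact h.choose_spec

lemma pickW_fst {Onn : Set (X × Y)} {A : Set X} {S : Set Y} (d : Y)
    (hA : A.Nonempty) (hoA : IsOpen A) :
    IsOpen (pickW Onn A S d).1 ∧ (pickW Onn A S d).1.Nonempty ∧ (pickW Onn A S d).1 ⊆ A := by
  rw [pickW]
  split
  · next h =>
    obtain ⟨h1, h2, h3, -⟩ := h.choose_spec
    exact ⟨h1, h2, h3⟩
  · exact ⟨hoA, hA, subset_rfl⟩

variable (O : ℕ → Set (X × Y)) (str : Y → List Y → Set Y) (extF : Set Y → Y → Set Y)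
  (ensf : Set Y → ℕ → Y) (F0 : Set Y) (d : Y)

def gsN (st : GSt X Y) : ℕ := (Nat.unpair (Nat.unpair (st.Fs.length - 1)).1).1
def gsR (st : GSt X Y) : ℕ := (Nat.unpair (st.Fs.length - 1)).1
def gsJ (st : GSt X Y) : ℕ := (Nat.unpair (Nat.unpair (Nat.unpair (st.Fs.length - 1)).1).2).1
def gsM (st : GSt X Y) : ℕ := (Nat.unpair (Nat.unpair (Nat.unpair (st.Fs.length - 1)).1).2).2

/-- The current open set offered by the W̃-strategy. -/
noncomputable def stS (st : GSt X Y) : Set Y :=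
  str (ensf (st.Fs.getD (gsJ st) F0) (gsM st)) (st.runs (gsR st))

/-- One step of the construction. -/
noncomputable def gstep (A : Set X) (st : GSt X Y) : GSt X Y := by
  classical
  exact if A.Nonempty ∧ IsOpen A then
    ⟨(pickW (O (gsN st)) A (stS str ensf F0 st) d).1,
     st.Fs ++ [extF (st.Fs.getD (st.Fs.length - 1) F0)
        (pickW (O (gsN st)) A (stS str ensf F0 st) d).2.2],
     Function.update st.runs (gsR st)
        (st.runs (gsR st) ++ [(pickW (O (gsN st)) A (stS str ensf F0 st) d).2.2]),
     fun k => if k = gsN st then st.rcd k ∪ (pickW (O (gsN st)) A (stS str ensf F0 st) d).2.1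
       else st.rcd k⟩
  else ⟨st.U, st.Fs ++ [st.Fs.getD (st.Fs.length - 1) F0], st.runs, st.rcd⟩

lemma gstep_pos (A : Set X) (st : GSt X Y) (h : A.Nonempty ∧ IsOpen A) :
    gstep O str extF ensf F0 d A st =
    ⟨(pickW (O (gsN st)) A (stS str ensf F0 st) d).1,
     st.Fs ++ [extF (st.Fs.getD (st.Fs.length - 1) F0)
        (pickW (O (gsN st)) A (stS str ensf F0 st) d).2.2],
     Function.update st.runs (gsR st)
        (st.runs (gsR st) ++ [(pickW (O (gsN st)) A (stS str ensf F0 st) d).2.2]),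
     fun k => if k = gsN st then st.rcd k ∪ (pickW (O (gsN st)) A (stS str ensf F0 st) d).2.1
       else st.rcd k⟩ := by
  rw [gstep]
  simp only [if_pos h]

lemma gstep_len (A : Set X) (st : GSt X Y) :
    (gstep O str extF ensf F0 d A st).Fs.length = st.Fs.length + 1 := by
  rw [gstep]
  split <;> simp

lemma gstep_U (A : Set X) (st : GSt X Y) (hU : IsOpen st.U ∧ st.U.Nonempty) :
    IsOpen (gstep O str extF ensf F0 d A st).U ∧ (gstep O str extF ensf F0 d A st).U.Nonempty := by
  rw [gstep]
  split
  · next h => exact ⟨(pickW_fst d h.1 h.2).1, (pickW_fst d h.1 h.2).2.1⟩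
  · exact hU

lemma gstep_U_sub (A : Set X) (st : GSt X Y) (h : A.Nonempty ∧ IsOpen A) :
    (gstep O str extF ensf F0 d A st).U ⊆ A := by
  rw [gstep_pos O str extF ensf F0 d A st h]
  exact (pickW_fst d h.1 h.2).2.2

end Machinery

lemma ofFn_snoc {α : Type*} (g : ℕ → α) (b : ℕ) :
    (List.ofFn fun i : Fin (b+1) => g i) = (List.ofFn fun i : Fin b => g i) ++ [g b] := by
  rw [List.ofFn_succ', List.concat_eq_append]
  simp

/-- If `X` is a Baire space and `Y` is a W̃-space possessing a rich family of Baire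
subspaces, then `X × Y` is a Baire space. -/
theorem baireSpace_prod_of_wtilde {X Y : Type*} [TopologicalSpace X] [TopologicalSpace Y]
    [BaireSpace X]
    (hY : ∀ y : Y, IsWtildePoint y)
    (𝓕 : Set (Set Y)) (h𝓕 : IsRichFamily 𝓕)
    (hBaire : ∀ F ∈ 𝓕, BaireSpace F) :
    BaireSpace (X × Y) := by
  classical
  refine ⟨fun f hfo hfd => ?_⟩
  rw [dense_iff_inter_open]
  intro W hW hWne
  obtain ⟨⟨x0, y0⟩, hxyW⟩ := hWne
  obtain ⟨U0, V0, hU0o, hV0o, hx0, hy0, hUVW⟩ := isOpen_prod_iff.mp hW x0 y0 hxyW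
  -- choose the winning strategies
  have hY' : ∀ y : Y, ∃ σ : List Y → Set Y,
      (∀ h : List Y, IsOpen (σ h) ∧ (σ h).Nonempty) ∧
      ∀ p : ℕ → Y, (∀ n : ℕ, p n ∈ σ (List.ofFn fun i : Fin n => p i)) →
        MapClusterPt y atTop p := hY
  choose str hstr1 hstr2 using hY'
  obtain ⟨hmem, hcontain, hchain⟩ := h𝓕
  obtain ⟨F0, hF0mem, hF0sub⟩ := hcontain {y0}
    ⟨{y0}, subset_rfl, countable_singleton y0, subset_closure⟩
  have hy0F0 : y0 ∈ F0 := hF0sub rfl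
  -- extension choice function
  have hext0 : ∀ F : Set Y, ∀ y : Y, ∃ F' : Set Y, F ∈ 𝓕 → (F' ∈ 𝓕 ∧ F ⊆ F' ∧ y ∈ F') := by
    intro F y
    by_cases hF : F ∈ 𝓕
    · obtain ⟨-, -, c, hc1, hc2, hc3⟩ := hmem F hF
      obtain ⟨F', hF'1, hF'2⟩ := hcontain (F ∪ {y})
        ⟨c ∪ {y}, union_subset_union hc1 subset_rfl, hc2.union (countable_singleton y),
          union_subset (hc3.trans (closure_mono subset_union_left))
            (subset_closure.trans (closure_mono subset_union_right))⟩
      exact ⟨F', fun _ => ⟨hF'1, subset_union_left.trans hF'2,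
        hF'2 (mem_union_right _ rfl)⟩⟩
    · exact ⟨F, fun h => absurd h hF⟩
  choose extF hextF using hext0
  -- dense-sequence choice function
  have hens0 : ∀ F : Set Y, ∃ g : ℕ → Y, F ∈ 𝓕 → (range g ⊆ F ∧ F ⊆ closure (range g)) := by
    intro F
    by_cases hF : F ∈ 𝓕
    · obtain ⟨hFne, -, c, hc1, hc2, hc3⟩ := hmem F hF
      have hcne : c.Nonempty := by
        rcases eq_empty_or_nonempty c with rfl | h
        · rw [closure_empty] at hc3
          exact absurd (hc3 hFne.choose_spec) (notMem_empty _)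
        · exact h
      obtain ⟨g, hg⟩ := hc2.exists_eq_range hcne
      exact ⟨g, fun _ => ⟨hg ▸ hc1, hg ▸ hc3⟩⟩
    · exact ⟨fun _ => y0, fun h => absurd h hF⟩
  choose ensf hensf using hens0
  -- the strategy for the Banach–Mazur game on X
  set stp : Set X → GSt X Y → GSt X Y := gstep f str extF ensf F0 y0 with hstp
  set gS : List (Set X) → GSt X Y :=
    fun l => l.foldr stp ⟨U0, [F0], fun _ => [], fun _ => ∅⟩ with hgS
  have hgnil : gS [] = ⟨U0, [F0], fun _ => [], fun _ => ∅⟩ := rfl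
  have hgcons : ∀ A l, gS (A :: l) = stp A (gS l) := fun A l => rfl
  have hgU : ∀ l, IsOpen (gS l).U ∧ (gS l).U.Nonempty := by
    intro l
    induction l with
    | nil => exact ⟨hU0o, ⟨x0, hx0⟩⟩
    | cons A l ih =>
      rw [hgcons, hstp]
      exact gstep_U f str extF ensf F0 y0 A (gS l) ih
  have hgsub : ∀ A l, A.Nonempty → IsOpen A → (gS (A :: l)).U ⊆ A := by
    intro A l hne ho
    rw [hgcons, hstp]
    exact gstep_U_sub f str extF ensf F0 y0 A (gS l) ⟨hne, ho⟩
  obtain ⟨B, hB, x, hx⟩ := bm_defeat (fun l => (gS l).U)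
    (fun l => (hgU l).1) (fun l => (hgU l).2) hgsub
  set sts : ℕ → GSt X Y := fun s => gS ((List.ofFn fun i : Fin s => B i).reverse) with hsts
  have hsts0 : sts 0 = ⟨U0, [F0], fun _ => [], fun _ => ∅⟩ := rfl
  have histS : ∀ s : ℕ, (List.ofFn fun i : Fin (s+1) => B i).reverse
      = B s :: (List.ofFn fun i : Fin s => B i).reverse := by
    intro s
    rw [ofFn_snoc, List.reverse_append]
    simp
  have hstsS : ∀ s, sts (s+1) = stp (B s) (sts s) := by
    intro s
    rw [hsts]
    simp only []
    rw [histS s, hgcons]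
  have hBo : ∀ s, IsOpen (B s) := fun s => (hB s).1
  have hBne : ∀ s, (B s).Nonempty := fun s => (hB s).2.1
  have hleg : ∀ s, B s ⊆ (sts s).U := fun s => (hB s).2.2
  have hxB : ∀ s, x ∈ B s := fun s => mem_iInter.mp hx s
  have hxU : ∀ s, x ∈ (sts s).U := fun s => hleg s (hxB s)
  have hlen : ∀ s, (sts s).Fs.length = s + 1 := by
    intro s
    induction s with
    | zero => rw [hsts0]; rfl
    | succ s ih =>
      rw [hstsS s, hstp, gstep_len, ih]
  have hgsN : ∀ s, gsN (sts s) = (Nat.unpair (Nat.unpair s).1).1 := by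
    intro s
    simp only [gsN, hlen s, Nat.add_sub_cancel]
  have hgsR : ∀ s, gsR (sts s) = (Nat.unpair s).1 := by
    intro s
    simp only [gsR, hlen s, Nat.add_sub_cancel]
  have hgsJ : ∀ s, gsJ (sts s) = (Nat.unpair (Nat.unpair (Nat.unpair s).1).2).1 := by
    intro s
    simp only [gsJ, hlen s, Nat.add_sub_cancel]
  have hgsM : ∀ s, gsM (sts s) = (Nat.unpair (Nat.unpair (Nat.unpair s).1).2).2 := by
    intro s
    simp only [gsM, hlen s, Nat.add_sub_cancel]
  -- the pick at each stage exists
  have hP : ∀ s, ∃ w, Pw (f (gsN (sts s))) (B s) (stS str ensf F0 (sts s)) w := by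
    intro s
    have hSo : IsOpen (stS str ensf F0 (sts s)) := (hstr1 _ _).1
    have hSne : (stS str ensf F0 (sts s)).Nonempty := (hstr1 _ _).2
    obtain ⟨z, hzP, hzf⟩ := (hfd (gsN (sts s))).inter_open_nonempty
      ((B s) ×ˢ (stS str ensf F0 (sts s))) ((hBo s).prod hSo) ((hBne s).prod hSne)
    obtain ⟨u, v, huo, hvo, hzu, hzv, huv⟩ := isOpen_prod_iff.mp (hfo _) z.1 z.2 hzf
    refine ⟨(u ∩ B s, v, z.2), huo.inter (hBo s), ⟨z.1, hzu, hzP.1⟩, inter_subset_right,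
      hvo, hzv, hzP.2, ?_⟩
    exact (Set.prod_mono inter_subset_left subset_rfl).trans huv
  set w : ℕ → Set X × Set Y × Y :=
    fun s => pickW (f (gsN (sts s))) (B s) (stS str ensf F0 (sts s)) y0 with hwdef
  have hw : ∀ s, Pw (f (gsN (sts s))) (B s) (stS str ensf F0 (sts s)) (w s) :=
    fun s => pickW_spec y0 (hP s)
  have hSE : ∀ s, sts (s+1) =
      ⟨(w s).1,
       (sts s).Fs ++ [extF ((sts s).Fs.getD ((sts s).Fs.length - 1) F0) (w s).2.2],
       Function.update (sts s).runs (gsR (sts s)) ((sts s).runs (gsR (sts s)) ++ [(w s).2.2]),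
       fun k => if k = gsN (sts s) then (sts s).rcd k ∪ (w s).2.1 else (sts s).rcd k⟩ := by
    intro s
    rw [hstsS s, hstp, gstep_pos f str extF ensf F0 y0 (B s) (sts s) ⟨hBne s, hBo s⟩]
  have hU1 : ∀ s, (sts (s+1)).U = (w s).1 := fun s => by rw [hSE s]
  have hFs1 : ∀ s, (sts (s+1)).Fs
      = (sts s).Fs ++ [extF ((sts s).Fs.getD s F0) (w s).2.2] := by
    intro s
    rw [hSE s]
    simp only [hlen s, Nat.add_sub_cancel]
  have hrun1 : ∀ s, (sts (s+1)).runs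
      = Function.update (sts s).runs ((Nat.unpair s).1)
          ((sts s).runs ((Nat.unpair s).1) ++ [(w s).2.2]) := by
    intro s
    rw [hSE s]
    simp only [hgsR s]
  have hrcd1 : ∀ s, (sts (s+1)).rcd
      = fun k => if k = gsN (sts s) then (sts s).rcd k ∪ (w s).2.1 else (sts s).rcd k :=
    fun s => by rw [hSE s]
  -- the chain of rich family members
  set Fch : ℕ → Set Y := fun i => (sts i).Fs.getD i F0 with hFchdef
  have hFstab : ∀ s i, i ≤ s → (sts s).Fs.getD i F0 = Fch i := by
    intro s
    induction s with
    | zero =>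
      intro i hi
      rw [Nat.le_zero] at hi
      subst hi
      rfl
    | succ s ih =>
      intro i hi
      rcases eq_or_lt_of_le hi with rfl | h
      · rfl
      · have hi' : i ≤ s := by omega
        rw [hFs1 s, List.getD_append _ _ _ _ (by rw [hlen s]; omega)]
        exact ih i hi'
  have hFchsucc : ∀ s, Fch (s+1) = extF (Fch s) ((w s).2.2) := by
    intro s
    show (sts (s+1)).Fs.getD (s+1) F0 = _
    rw [hFs1 s, List.getD_append_right _ _ _ _ (by rw [hlen s]), hlen s]
    simp only [Nat.sub_self, List.getD_cons_zero]
    rfl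
  have hFch0 : Fch 0 = F0 := by
    show (sts 0).Fs.getD 0 F0 = F0
    rw [hsts0]
    rfl
  have hFchF : ∀ i, Fch i ∈ 𝓕 := by
    intro i
    induction i with
    | zero => rw [hFch0]; exact hF0mem
    | succ i ih => rw [hFchsucc i]; exact (hextF _ _ ih).1
  have hFchmono : ∀ i, Fch i ⊆ Fch (i+1) := by
    intro i
    rw [hFchsucc i]
    exact (hextF _ _ (hFchF i)).2.1
  have hwFch : ∀ s, (w s).2.2 ∈ Fch (s+1) := by
    intro s
    rw [hFchsucc s]
    exact (hextF _ _ (hFchF s)).2.2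
  set Fbig : Set Y := closure (⋃ i, Fch i) with hFbigdef
  have hFbigF : Fbig ∈ 𝓕 := hchain Fch hFchF (monotone_nat_of_le_succ hFchmono)
  have hpFb : ∀ s, (w s).2.2 ∈ Fbig := fun s =>
    subset_closure (mem_iUnion.mpr ⟨s+1, hwFch s⟩)
  have hy0Fb : y0 ∈ Fbig := subset_closure (mem_iUnion.mpr ⟨0, hFch0 ▸ hy0F0⟩)
  -- recorded open sets
  have hrcdo : ∀ s k, IsOpen ((sts s).rcd k) := by
    intro s
    induction s with
    | zero => intro k; rw [hsts0]; exact isOpen_empty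
    | succ s ih =>
      intro k
      rw [congrFun (hrcd1 s) k]
      by_cases hkn : k = gsN (sts s)
      · rw [if_pos hkn]
        exact (ih k).union (hw s).2.2.2.1
      · rw [if_neg hkn]
        exact ih k
  have hrcdU : ∀ s k, (sts s).U ×ˢ (sts s).rcd k ⊆ f k := by
    intro s
    induction s with
    | zero => intro k; rw [hsts0]; simp
    | succ s ih =>
      intro k
      rw [hU1 s, congrFun (hrcd1 s) k]
      have hsubU : (w s).1 ⊆ (sts s).U := (hw s).2.2.1.trans (hleg s)
      by_cases hkn : k = gsN (sts s)
      · rw [if_pos hkn, Set.prod_union]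
        apply union_subset
        · exact (Set.prod_mono hsubU subset_rfl).trans (ih k)
        · rw [hkn]
          exact (hw s).2.2.2.2.2.2
      · rw [if_neg hkn]
        exact (Set.prod_mono hsubU subset_rfl).trans (ih k)
  set Gn : ℕ → Set Y := fun k => ⋃ s, (sts s).rcd k with hGndef
  have hGno : ∀ k, IsOpen (Gn k) := fun k => isOpen_iUnion fun s => hrcdo s k
  have hGf : ∀ k y, y ∈ Gn k → (x, y) ∈ f k := by
    intro k y hy
    obtain ⟨s, hs⟩ := mem_iUnion.mp hy
    exact hrcdU s k ⟨hxU s, hs⟩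
  -- run bookkeeping
  have hpairr : ∀ (u : ℕ), (Nat.unpair u).1 = (Nat.unpair u).1 := fun _ => rfl
  have hueq : ∀ u r, (Nat.unpair u).1 = r → u = Nat.pair r (Nat.unpair u).2 := by
    intro u r h
    conv_lhs => rw [← Nat.pair_unpair u]
    rw [h]
  have hreflect : ∀ r b b', Nat.pair r b < Nat.pair r b' → b < b' := by
    intro r b b' h
    by_contra hc
    push_neg at hc
    rcases eq_or_lt_of_le hc with rfl | h'
    · exact lt_irrefl _ h
    · exact absurd (Nat.pair_lt_pair_right r h') (by omega)
  have hrunstab : ∀ r s s', s ≤ s' →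
      (∀ u, s ≤ u → u < s' → (Nat.unpair u).1 ≠ r) →
      (sts s').runs r = (sts s).runs r := by
    intro r s s' hss
    induction s', hss using Nat.le_induction with
    | base => intro _; rfl
    | succ s' hss ih =>
      intro hno
      have h1 : (sts (s'+1)).runs r = (sts s').runs r := by
        rw [hrun1 s']
        exact Function.update_of_ne (Ne.symm (hno s' hss (by omega))) _ _
      rw [h1]
      exact ih fun u hu hu' => hno u hu (by omega)
  have hrunEq : ∀ r b, (sts (Nat.pair r b)).runs r
      = List.ofFn (fun i : Fin b => (w (Nat.pair r i)).2.2) := by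
    intro r b
    induction b with
    | zero =>
      have h0 : (sts (Nat.pair r 0)).runs r = (sts 0).runs r := by
        apply hrunstab r 0 (Nat.pair r 0) (Nat.zero_le _)
        intro u _ hu' hru
        have := hueq u r hru
        have h2 : Nat.pair r 0 ≤ Nat.pair r (Nat.unpair u).2 := by
          rcases Nat.eq_zero_or_pos (Nat.unpair u).2 with h3 | h3
          · rw [h3]
          · exact le_of_lt (Nat.pair_lt_pair_right r h3)
        omega
      rw [h0, hsts0]
      simp
    | succ b ih =>
      have h1 : (sts (Nat.pair r b + 1)).runs r
          = (sts (Nat.pair r b)).runs r ++ [(w (Nat.pair r b)).2.2] := by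
        rw [hrun1 (Nat.pair r b)]
        have hup : (Nat.unpair (Nat.pair r b)).1 = r := by simp
        rw [hup, Function.update_self]
      have h2 : (sts (Nat.pair r (b+1))).runs r = (sts (Nat.pair r b + 1)).runs r := by
        apply hrunstab r (Nat.pair r b + 1) (Nat.pair r (b+1))
          (Nat.pair_lt_pair_right r (by omega))
        intro u hu hu' hru
        have h3 := hueq u r hru
        have h4 : b < (Nat.unpair u).2 := hreflect r b _ (by omega)
        have h5 : (Nat.unpair u).2 < b + 1 := hreflect r _ (b+1) (by omega)
        omega
      rw [h2, h1, ih]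
      exact (ofFn_snoc (fun n => (w (Nat.pair r n)).2.2) b).symm
  have hjle : ∀ r b, (Nat.unpair (Nat.unpair r).2).1 ≤ Nat.pair r b := by
    intro r b
    calc (Nat.unpair (Nat.unpair r).2).1 ≤ (Nat.unpair r).2 := Nat.unpair_left_le _
    _ ≤ r := Nat.unpair_right_le r
    _ ≤ Nat.pair r b := Nat.left_le_pair r b
  have hstS2 : ∀ r b, stS str ensf F0 (sts (Nat.pair r b)) =
      str (ensf (Fch ((Nat.unpair (Nat.unpair r).2).1)) ((Nat.unpair (Nat.unpair r).2).2))
        (List.ofFn fun i : Fin b => (w (Nat.pair r i)).2.2) := by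
    intro r b
    rw [stS, hgsJ, hgsM, hgsR]
    simp only [Nat.unpair_pair]
    rw [hFstab _ _ (hjle r b), hrunEq r b]
  have hclus : ∀ r : ℕ, MapClusterPt
      (ensf (Fch ((Nat.unpair (Nat.unpair r).2).1)) ((Nat.unpair (Nat.unpair r).2).2))
      atTop (fun b => (w (Nat.pair r b)).2.2) := by
    intro r
    apply hstr2
    intro b
    have h6 := (hw (Nat.pair r b)).2.2.2.2.2.1
    rw [hstS2 r b] at h6
    exact h6
  have hpG : ∀ r b, (w (Nat.pair r b)).2.2 ∈ Gn ((Nat.unpair r).1) := by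
    intro r b
    have h5 := (hw (Nat.pair r b)).2.2.2.2.1
    have h7 : (w (Nat.pair r b)).2.2 ∈ (sts (Nat.pair r b + 1)).rcd (gsN (sts (Nat.pair r b))) := by
      rw [congrFun (hrcd1 (Nat.pair r b)) _, if_pos rfl]
      exact mem_union_right _ h5
    have h8 : gsN (sts (Nat.pair r b)) = (Nat.unpair r).1 := by
      rw [hgsN]
      simp only [Nat.unpair_pair]
    rw [h8] at h7
    exact mem_iUnion.mpr ⟨Nat.pair r b + 1, h7⟩
  -- density of the union of dense sequences in Fbig
  have hEb : Fbig ⊆ closure (⋃ i, range (ensf (Fch i))) := by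
    rw [hFbigdef]
    refine closure_minimal (iUnion_subset fun i => ?_) isClosed_closure
    exact ((hensf (Fch i) (hFchF i)).2).trans
      (closure_mono (subset_iUnion (fun i => range (ensf (Fch i))) i))
  -- final Baire argument inside Fbig
  haveI hBT : BaireSpace ↥Fbig := hBaire Fbig hFbigF
  set v0 : Set ↥Fbig := Subtype.val ⁻¹' V0 with hv0def
  have hv0o : IsOpen v0 := hV0o.preimage continuous_subtype_val
  have hv0ne : v0.Nonempty := ⟨⟨y0, hy0Fb⟩, hy0⟩
  have hdensev0 : ∀ k, v0 ⊆ closure (Subtype.val ⁻¹' Gn k : Set ↥Fbig) := by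
    intro k z hz
    rw [mem_closure_iff]
    intro o ho hzo
    obtain ⟨N, hNo, hNeq⟩ := isOpen_induced_iff.mp ho
    have hzN : (z : Y) ∈ N := by
      rw [← hNeq] at hzo
      exact hzo
    have hzE : (z : Y) ∈ closure (⋃ i, range (ensf (Fch i))) := hEb z.2
    obtain ⟨e, heo, heE⟩ := mem_closure_iff.mp hzE (N ∩ V0) (hNo.inter hV0o) ⟨hzN, hz⟩
    obtain ⟨i, hei⟩ := mem_iUnion.mp heE
    obtain ⟨m', hem⟩ := hei
    set r := Nat.pair k (Nat.pair i m') with hrdef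
    have hdec1 : (Nat.unpair (Nat.unpair r).2).1 = i := by
      rw [hrdef]
      simp [Nat.unpair_pair]
    have hdec2 : (Nat.unpair (Nat.unpair r).2).2 = m' := by
      rw [hrdef]
      simp [Nat.unpair_pair]
    have hdec3 : (Nat.unpair r).1 = k := by
      rw [hrdef]
      simp [Nat.unpair_pair]
    have hcl := hclus r
    rw [hdec1, hdec2, hem] at hcl
    have hNV : N ∩ V0 ∈ 𝓝 e := (hNo.inter hV0o).mem_nhds heo
    obtain ⟨b, hbNV⟩ := ((mapClusterPt_iff_frequently.mp hcl) (N ∩ V0) hNV).exists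
    have hbG : (w (Nat.pair r b)).2.2 ∈ Gn k := hdec3 ▸ hpG r b
    refine ⟨⟨(w (Nat.pair r b)).2.2, hpFb _⟩, ?_, ?_⟩
    · rw [← hNeq]
      exact hbNV.1
    · exact hbG
  have hDd : ∀ k, Dense ((Subtype.val ⁻¹' Gn k : Set ↥Fbig) ∪ (closure v0)ᶜ) := by
    intro k z
    by_cases hz : z ∈ closure v0
    · have h1 : closure v0 ⊆ closure (Subtype.val ⁻¹' Gn k : Set ↥Fbig) := by
        rw [← closure_closure (s := (Subtype.val ⁻¹' Gn k : Set ↥Fbig))]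
        exact closure_mono (hdensev0 k)
      exact closure_mono subset_union_left (h1 hz)
    · exact subset_closure (mem_union_right _ hz)
  have hDo : ∀ k, IsOpen ((Subtype.val ⁻¹' Gn k : Set ↥Fbig) ∪ (closure v0)ᶜ) :=
    fun k => ((hGno k).preimage continuous_subtype_val).union isClosed_closure.isOpen_compl
  obtain ⟨z, hzv0, hzI⟩ := (dense_iInter_of_isOpen hDo hDd).inter_open_nonempty v0 hv0o hv0ne
  have hzG : ∀ k, (z : Y) ∈ Gn k := by
    intro k
    rcases mem_iInter.mp hzI k with h | h
    · exact h
    · exact absurd (subset_closure hzv0) h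
  have hxU0 : x ∈ U0 := by
    have h9 := hxU 0
    rw [hsts0] at h9
    exact h9
  exact ⟨(x, (z : Y)), hUVW ⟨hxU0, hzv0⟩, mem_iInter.mpr fun k => hGf k _ (hzG k)⟩
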